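/- Let f : F_p^n → [0,1], let ψ(x) ∈ [0,1] and φ be defined as follows: B is a partition of F_p^n, φ is B-measurable with values in [0,1], and on each atom b with α = E[f|B](b) and β = φ(b), define ψ(x) = (β−α)/(1−α) if α ≤ β and f(x) = 0; ψ(x) = 1 if α ≤ β and f(x) = 1; ψ(x) = 0 if α > β and f(x) = 0; ψ(x) = β/α if α > β and f(x) = 1. (If α = 1 and α ≤ β then β = 1 and take ψ = f; similarly if α = 0 and α > β is vacuous.) Assume f is {0,1}-valued. Then: (i) E[ψ|B] = φ, and (ii) ‖f − ψ‖_1 = ‖E[f|B] − φ‖_1. -/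

import Mathlib

open Finset

open scoped Classical in
/-- Conditional expectation over the fibers of `B`. -/
noncomputable def condExp {X α : Type*} [Fintype X] (B : X → α) (g : X → ℝ) (x : X) : ℝ :=
  (∑ y ∈ Finset.univ.filter (fun y => B y = B x), g y) /
    ((Finset.univ.filter (fun y => B y = B x)).card : ℝ)

/-- `L¹` average. -/
noncomputable def l1Avg {X : Type*} [Fintype X] (g : X → ℝ) : ℝ :=
  (∑ x : X, |g x|) / (Fintype.card X : ℝ)

/-- Let `f : X → {0,1}`, `B` a partition of the finite set `X`, and
`φ` a `B`-measurable `[0,1]`-valued function. On each atom, with `α = E[f|B]` and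
`β = φ`, define `ψ(x) = (β−α)/(1−α)` if `α ≤ β, f(x) = 0`; `ψ(x) = 1` if `α ≤ β,
f(x) = 1`; `ψ(x) = 0` if `α > β, f(x) = 0`; `ψ(x) = β/α` if `α > β, f(x) = 1`.
Then (i) `E[ψ|B] = φ` and (ii) `‖f − ψ‖₁ = ‖E[f|B] − φ‖₁`. -/
theorem pullback_properties {X α : Type*} [Fintype X] [Nonempty X] (B : X → α)
    (f φ ψ : X → ℝ)
    (hf : ∀ x, f x ∈ ({0, 1} : Set ℝ))
    (hφmeas : ∀ x y, B x = B y → φ x = φ y)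
    (hφrange : ∀ x, φ x ∈ Set.Icc (0 : ℝ) 1)
    (hψ : ∀ x, ψ x =
      if condExp B f x ≤ φ x then
        (if f x = 1 then 1 else (φ x - condExp B f x) / (1 - condExp B f x))
      else
        (if f x = 1 then φ x / condExp B f x else 0)) :
    (∀ x, condExp B ψ x = φ x) ∧
    l1Avg (fun x => f x - ψ x) = l1Avg (fun x => condExp B f x - φ x) := by
  classical
  have h01 : ∀ y, f y = 0 ∨ f y = 1 := fun y => by have := hf y; simpa using this
  have hatom : ∀ x y : X, B y = B x →
      (Finset.univ.filter (fun z => B z = B y)) = (Finset.univ.filter (fun z => B z = B x)) := by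
    intro x y h
    ext z; simp [h]
  have hce : ∀ (g : X → ℝ) (x y : X), B y = B x → condExp B g y = condExp B g x := by
    intro g x y h
    unfold condExp
    rw [hatom x y h]
  have key : ∀ x : X,
      (∑ y ∈ Finset.univ.filter (fun y => B y = B x), ψ y)
        = ((Finset.univ.filter (fun y => B y = B x)).card : ℝ) * φ x ∧
      (∑ y ∈ Finset.univ.filter (fun y => B y = B x), |f y - ψ y|)
        = ((Finset.univ.filter (fun y => B y = B x)).card : ℝ)
            * |condExp B f x - φ x| := by
    intro x
    set s : Finset X := Finset.univ.filter (fun y => B y = B x) with hs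
    have hxs : x ∈ s := by simp [hs]
    set s1 : Finset X := s.filter (fun y => f y = 1) with hs1
    set N : ℝ := (s.card : ℝ) with hNdef
    set k : ℝ := (s1.card : ℝ) with hkdef
    have hNpos : 0 < N := by
      have h : 0 < s.card := Finset.card_pos.mpr ⟨x, hxs⟩
      rw [hNdef]; exact_mod_cast h
    have hk0 : 0 ≤ k := by
      rw [hkdef]; positivity
    have hkN : k ≤ N := by
      have h : s1.card ≤ s.card := Finset.card_le_card (Finset.filter_subset _ _)
      rw [hNdef, hkdef]; exact_mod_cast h
    set β : ℝ := φ x with hβdef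
    set a : ℝ := condExp B f x with hadef
    have hβ0 : 0 ≤ β := (hφrange x).1
    have hβ1 : β ≤ 1 := (hφrange x).2
    -- sum of f over the atom
    have hfsum : ∑ y ∈ s, f y = k := by
      rw [← Finset.sum_filter_add_sum_filter_not s (fun y => f y = 1) f]
      have h1 : ∑ y ∈ s.filter (fun y => f y = 1), f y = k := by
        rw [Finset.sum_congr rfl (fun y hy => (Finset.mem_filter.mp hy).2)]
        simp [hkdef, hs1]
      have h0 : ∑ y ∈ s.filter (fun y => ¬ f y = 1), f y = 0 := by
        apply Finset.sum_eq_zero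
        intro y hy
        rcases h01 y with h | h
        · exact h
        · exact absurd h (Finset.mem_filter.mp hy).2
      rw [h1, h0, add_zero]
    have hα : a = k / N := by
      rw [hadef]
      unfold condExp
      rw [← hs, hfsum]
    have hcard0 : ((s.filter (fun y => ¬ f y = 1)).card : ℝ) = N - k := by
      have := Finset.card_filter_add_card_filter_not
        (s := s) (p := fun y => f y = 1)
      have h' : s1.card + (s.filter (fun y => ¬ f y = 1)).card = s.card := this
      have : ((s1.card : ℝ)) + ((s.filter (fun y => ¬ f y = 1)).card : ℝ) = (s.card : ℝ) := by
        exact_mod_cast h'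
      linarith [this]
    -- values of ψ on the two pieces
    have hψ1 : ∀ y ∈ s1, ψ y = if a ≤ β then 1 else β / a := by
      intro y hy
      obtain ⟨hys, hfy⟩ := Finset.mem_filter.mp hy
      have hB : B y = B x := (Finset.mem_filter.mp hys).2
      rw [hψ y, hce f x y hB, hφmeas y x hB, if_pos hfy, if_pos hfy]
    have hψ0 : ∀ y ∈ s.filter (fun y => ¬ f y = 1),
        ψ y = if a ≤ β then (β - a) / (1 - a) else 0 := by
      intro y hy
      obtain ⟨hys, hfy⟩ := Finset.mem_filter.mp hy
      have hB : B y = B x := (Finset.mem_filter.mp hys).2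
      rw [hψ y, hce f x y hB, hφmeas y x hB, if_neg hfy, if_neg hfy]
    have hf0 : ∀ y ∈ s.filter (fun y => ¬ f y = 1), f y = 0 := by
      intro y hy
      rcases h01 y with h | h
      · exact h
      · exact absurd h (Finset.mem_filter.mp hy).2
    -- sum of ψ over atom, as a closed expression
    have hψsum : ∑ y ∈ s, ψ y
        = k * (if a ≤ β then 1 else β / a)
          + (N - k) * (if a ≤ β then (β - a) / (1 - a) else 0) := by
      rw [← Finset.sum_filter_add_sum_filter_not s (fun y => f y = 1) ψ]
      rw [Finset.sum_congr rfl hψ1, Finset.sum_congr rfl hψ0]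
      rw [Finset.sum_const, Finset.sum_const, nsmul_eq_mul, nsmul_eq_mul, hcard0]
    have habs : ∑ y ∈ s, |f y - ψ y|
        = k * |1 - (if a ≤ β then 1 else β / a)|
          + (N - k) * |(if a ≤ β then (β - a) / (1 - a) else 0)| := by
      rw [← Finset.sum_filter_add_sum_filter_not s (fun y => f y = 1) (fun y => |f y - ψ y|)]
      have e1 : ∀ y ∈ s1, |f y - ψ y| = |1 - (if a ≤ β then 1 else β / a)| := by
        intro y hy
        rw [hψ1 y hy, (Finset.mem_filter.mp hy).2]
      have e0 : ∀ y ∈ s.filter (fun y => ¬ f y = 1),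
          |f y - ψ y| = |(if a ≤ β then (β - a) / (1 - a) else 0)| := by
        intro y hy
        rw [hψ0 y hy, hf0 y hy, zero_sub, abs_neg]
      rw [Finset.sum_congr rfl e1, Finset.sum_congr rfl e0]
      rw [Finset.sum_const, Finset.sum_const, nsmul_eq_mul, nsmul_eq_mul, hcard0]
    clear hψ1 hψ0 hf0 hfsum hxs hcard0 hadef hβdef hNdef hkdef hs hs1
    clear_value s s1 N k β a
    by_cases hle : a ≤ β
    · -- case α ≤ β
      simp only [if_pos hle] at hψsum habs
      have habsab : |a - β| = β - a := by
        rw [abs_of_nonpos (by linarith), neg_sub]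
      by_cases hkNeq : k = N
      · -- α = 1, forcing β = 1
        have ha1 : a = 1 := by rw [hα, hkNeq]; field_simp
        have hb1 : β = 1 := le_antisymm hβ1 (ha1 ▸ hle)
        constructor
        · rw [hψsum, hkNeq, ha1, hb1]; norm_num
        · rw [habs, habsab, hkNeq, ha1, hb1]; norm_num
      · have hklt : k < N := lt_of_le_of_ne hkN hkNeq
        have hNk : (0:ℝ) < N - k := by linarith
        have h1a : 1 - a = (N - k) / N := by rw [hα]; field_simp
        have h1apos : 0 < 1 - a := by rw [h1a]; positivity
        have hdiv : (β - a) / (1 - a) = (N * β - k) / (N - k) := by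
          rw [h1a, hα]
          field_simp
        have hkaN : k = a * N := by rw [hα]; field_simp
        have hnum : (0:ℝ) ≤ N * β - k := by nlinarith
        have hcanc : (N - k) * ((N * β - k) / (N - k)) = N * β - k := by
          field_simp
        constructor
        · rw [hψsum, hdiv, hcanc]
          ring
        · rw [habs, habsab, hdiv, abs_of_nonneg (div_nonneg hnum hNk.le), hcanc]
          simp only [sub_self, abs_zero, mul_zero, zero_add]
          rw [hkaN]
          ring
    · -- case α > β
      simp only [if_neg hle] at hψsum habs
      have hba : β < a := lt_of_not_ge hle
      have hapos : 0 < a := lt_of_le_of_lt hβ0 hba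
      have hkeq : k = a * N := by rw [hα]; field_simp
      have hkpos : 0 < k := by rw [hkeq]; positivity
      have habsab : |a - β| = a - β := abs_of_nonneg (by linarith)
      constructor
      · rw [hψsum, hkeq]
        field_simp
        ring
      · rw [habs, habsab, hkeq]
        have h1 : |1 - β / a| = (a - β) / a := by
          rw [show (1:ℝ) - β / a = (a - β) / a by field_simp]
          exact abs_of_nonneg (div_nonneg (by linarith) hapos.le)
        rw [h1]
        field_simp
        ring
  constructor
  · intro x
    have h := (key x).1
    unfold condExp
    rw [h]
    have hc : ((Finset.univ.filter (fun y => B y = B x)).card : ℝ) ≠ 0 := by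
      have : x ∈ Finset.univ.filter (fun y => B y = B x) := by simp
      have : 0 < (Finset.univ.filter (fun y => B y = B x)).card :=
        Finset.card_pos.mpr ⟨x, this⟩
      positivity
    rw [mul_comm, mul_div_assoc, div_self hc, mul_one]
  · unfold l1Avg
    congr 1
    rw [← Finset.sum_fiberwise_of_maps_to
        (t := Finset.univ.image B)
        (fun x _ => Finset.mem_image_of_mem B (Finset.mem_univ x))
        (fun x => |f x - ψ x|),
      ← Finset.sum_fiberwise_of_maps_to
        (t := Finset.univ.image B)
        (fun x _ => Finset.mem_image_of_mem B (Finset.mem_univ x))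
        (fun x => |condExp B f x - φ x|)]
    apply Finset.sum_congr rfl
    intro b hb
    obtain ⟨x0, -, rfl⟩ := Finset.mem_image.mp hb
    have h2 := (key x0).2
    rw [h2]
    have : ∀ y ∈ Finset.univ.filter (fun y => B y = B x0),
        |condExp B f y - φ y| = |condExp B f x0 - φ x0| := by
      intro y hy
      have hB : B y = B x0 := (Finset.mem_filter.mp hy).2
      rw [hce f x0 y hB, hφmeas y x0 hB]
    rw [Finset.sum_congr rfl this, Finset.sum_const, nsmul_eq_mul]
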